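/- Let k be a field of characteristic zero, n ≥ 1, and let R be a Noetherian local k-algebra with residue field k which is complete with respect to its maximal-ideal-adic topology. Set A_n := k[t]/(t^{n+1}), A_{n+1} := k[t]/(t^{n+2}), B_n := k[t,ε]/(t^{n+1}, ε²) and C_n := k[t,ε]/(t^{n+1}, ε², εt^n). If the map Hom_{k-alg}(R, B_n) → Hom_{k-alg}(R, C_n) given by composing with the canonical surjection B_n → C_n is surjective, then the map Hom_{k-alg}(R, A_{n+1}) → Hom_{k-alg}(R, A_n) given by composing with the reduction A_{n+1} → A_n is surjective. -/

import Mathlib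

open Polynomial

universe u

/-- `k[t,ε]`, realized as `(k[t])[ε]` with `t` the inner and `ε` the outer variable. -/
noncomputable abbrev kTE (k : Type u) [Field k] : Type u := Polynomial (Polynomial k)

/-- The variable `t` in `k[t,ε]`. -/
noncomputable abbrev tP (k : Type u) [Field k] : kTE k := Polynomial.C Polynomial.X

/-- The variable `ε` in `k[t,ε]`. -/
noncomputable abbrev eP (k : Type u) [Field k] : kTE k := Polynomial.X

section Aux

variable {k : Type u} [Field k]

theorem taylorE (p : Polynomial k) : ∃ q : kTE k,
    aeval (tP k + eP k) p = C p + C (derivative p) * X + q * X ^ 2 := by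
  obtain ⟨c, hc⟩ := (p.map (algebraMap k (kTE k))).binomExpansion (tP k) (eP k)
  refine ⟨c, ?_⟩
  have h1 : ∀ r : Polynomial k, aeval (tP k) r = C r := by
    intro r
    have := aeval_algHom_apply (CAlgHom (R := k) (A := Polynomial k)) X r
    simpa [CAlgHom] using this
  rw [aeval_def, eval₂_eq_eval_map, hc, derivative_map]
  rw [show (p.map (algebraMap k (kTE k))).eval (tP k) = aeval (tP k) p from by
    rw [aeval_def, eval₂_eq_eval_map]]
  rw [show (derivative p |>.map (algebraMap k (kTE k))).eval (tP k) = aeval (tP k) (derivative p) from by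
    rw [aeval_def, eval₂_eq_eval_map]]
  rw [h1, h1]

lemma coeffE0 (p : Polynomial k) : (aeval (tP k + eP k) p).coeff 0 = p := by
  obtain ⟨q, hq⟩ := taylorE p
  simp [hq, coeff_mul_X_pow']

lemma coeffE1 (p : Polynomial k) : (aeval (tP k + eP k) p).coeff 1 = derivative p := by
  obtain ⟨q, hq⟩ := taylorE p
  simp [hq, coeff_mul_X_pow']


lemma tP_pow (m : ℕ) : (tP k ^ m : kTE k) = C (X ^ m) := C_pow.symm

lemma coeff_mul_tP (a : kTE k) (m i : ℕ) :
    (a * tP k ^ m).coeff i = a.coeff i * X ^ m := by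
  rw [tP_pow, coeff_mul_C]

lemma coeff_mul_etP0 (a : kTE k) (m : ℕ) :
    (a * (eP k * tP k ^ m)).coeff 0 = 0 := by
  have h : a * (eP k * tP k ^ m) = (a * C (X ^ m)) * X ^ 1 := by rw [tP_pow]; ring
  rw [h, coeff_mul_X_pow']
  simp

lemma coeff_mul_etP1 (a : kTE k) (m : ℕ) :
    (a * (eP k * tP k ^ m)).coeff 1 = a.coeff 0 * X ^ m := by
  have h : a * (eP k * tP k ^ m) = (a * C (X ^ m)) * X ^ 1 := by rw [tP_pow]; ring
  rw [h, coeff_mul_X_pow', if_pos le_rfl, coeff_mul_C]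

lemma mem_IB_iff (n : ℕ) (z : kTE k) :
    z ∈ Ideal.span {tP k ^ (n + 1), eP k ^ 2} ↔
      (X : Polynomial k) ^ (n + 1) ∣ z.coeff 0 ∧ (X : Polynomial k) ^ (n + 1) ∣ z.coeff 1 := by
  constructor
  · intro hz
    obtain ⟨a, b, hab⟩ := Ideal.mem_span_pair.mp hz
    constructor
    · refine ⟨a.coeff 0, ?_⟩
      rw [← hab, coeff_add, coeff_mul_tP]
      simp [coeff_mul_X_pow', mul_comm]
    · refine ⟨a.coeff 1, ?_⟩
      rw [← hab, coeff_add, coeff_mul_tP]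
      simp [coeff_mul_X_pow', mul_comm]
  · rintro ⟨⟨u, hu⟩, ⟨v, hv⟩⟩
    have hdvd : (X : kTE k) ^ 2 ∣ z - C (z.coeff 0) - C (z.coeff 1) * X := by
      rw [X_pow_dvd_iff]
      intro d hd
      interval_cases d <;> simp
    obtain ⟨q, hq⟩ := hdvd
    have hz : z = C u * tP k ^ (n + 1) + (C v * X) * tP k ^ (n + 1) + q * eP k ^ 2 := by
      have h1 : (C (z.coeff 0) : kTE k) = C u * tP k ^ (n + 1) := by
        rw [tP_pow, hu, C_mul]; ring
      have h2 : (C (z.coeff 1) * X : kTE k) = (C v * X) * tP k ^ (n + 1) := by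
        rw [tP_pow, hv, C_mul]; ring
      rw [← h1, ← h2]
      linear_combination hq
    rw [hz]
    have g1 : (tP k ^ (n+1) : kTE k) ∈ Ideal.span {tP k ^ (n + 1), eP k ^ 2} :=
      Ideal.subset_span (by simp)
    have g2 : (eP k ^ 2 : kTE k) ∈ Ideal.span {tP k ^ (n + 1), eP k ^ 2} :=
      Ideal.subset_span (by simp)
    exact Ideal.add_mem _ (Ideal.add_mem _ (Ideal.mul_mem_left _ _ g1) (Ideal.mul_mem_left _ _ g1))
      (Ideal.mul_mem_left _ _ g2)

lemma mem_IC_iff (n : ℕ) (z : kTE k) :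
    z ∈ Ideal.span {tP k ^ (n + 1), eP k ^ 2, eP k * tP k ^ n} ↔
      (X : Polynomial k) ^ (n + 1) ∣ z.coeff 0 ∧ (X : Polynomial k) ^ n ∣ z.coeff 1 := by
  constructor
  · intro hz
    rw [show ({tP k ^ (n + 1), eP k ^ 2, eP k * tP k ^ n} : Set (kTE k)) =
      insert (tP k ^ (n+1)) {eP k ^ 2, eP k * tP k ^ n} from rfl] at hz
    obtain ⟨a, w, hw, hzw⟩ := Ideal.mem_span_insert.mp hz
    obtain ⟨b, c, hbc⟩ := Ideal.mem_span_pair.mp hw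
    constructor
    · refine ⟨a.coeff 0, ?_⟩
      rw [hzw, ← hbc, coeff_add, coeff_add, coeff_mul_tP, coeff_mul_etP0]
      simp [coeff_mul_X_pow', mul_comm]
    · refine ⟨a.coeff 1 * X + c.coeff 0, ?_⟩
      rw [hzw, ← hbc, coeff_add, coeff_add, coeff_mul_tP, coeff_mul_etP1]
      simp [coeff_mul_X_pow']
      ring
  · rintro ⟨⟨u, hu⟩, ⟨v, hv⟩⟩
    have hdvd : (X : kTE k) ^ 2 ∣ z - C (z.coeff 0) - C (z.coeff 1) * X := by
      rw [X_pow_dvd_iff]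
      intro d hd
      interval_cases d <;> simp
    obtain ⟨q, hq⟩ := hdvd
    have hz : z = C u * tP k ^ (n + 1) + q * eP k ^ 2 + C v * (eP k * tP k ^ n) := by
      have h1 : (C (z.coeff 0) : kTE k) = C u * tP k ^ (n + 1) := by
        rw [tP_pow, hu, C_mul]; ring
      have h2 : (C (z.coeff 1) * X : kTE k) = C v * (eP k * tP k ^ n) := by
        rw [tP_pow, hv, C_mul]; ring
      rw [← h1, ← h2]
      linear_combination hq
    rw [hz]
    have g1 : (tP k ^ (n+1) : kTE k) ∈ Ideal.span {tP k ^ (n + 1), eP k ^ 2, eP k * tP k ^ n} :=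
      Ideal.subset_span (by simp)
    have g2 : (eP k ^ 2 : kTE k) ∈ Ideal.span {tP k ^ (n + 1), eP k ^ 2, eP k * tP k ^ n} :=
      Ideal.subset_span (by simp)
    have g3 : (eP k * tP k ^ n : kTE k) ∈ Ideal.span {tP k ^ (n + 1), eP k ^ 2, eP k * tP k ^ n} :=
      Ideal.subset_span (by simp)
    exact Ideal.add_mem _ (Ideal.add_mem _ (Ideal.mul_mem_left _ _ g1) (Ideal.mul_mem_left _ _ g2))
      (Ideal.mul_mem_left _ _ g3)

lemma E_mem_IC_dvd (n : ℕ) (p : Polynomial k)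
    (h : aeval (tP k + eP k) p ∈ Ideal.span {tP k ^ (n + 1), eP k ^ 2, eP k * tP k ^ n}) :
    (X : Polynomial k) ^ (n + 1) ∣ p := by
  have := ((mem_IC_iff n _).mp h).1
  rwa [coeffE0] at this


lemma E_mem_IB_dvd [CharZero k] (n : ℕ) (p : Polynomial k)
    (h : aeval (tP k + eP k) p ∈ Ideal.span {tP k ^ (n + 1), eP k ^ 2}) :
    (X : Polynomial k) ^ (n + 2) ∣ p := by
  obtain ⟨h0, h1⟩ := (mem_IB_iff n _).mp h
  rw [coeffE0] at h0
  rw [coeffE1] at h1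
  obtain ⟨u, hu⟩ := h0
  have hd : (derivative p).coeff n = 0 := by
    rw [X_pow_dvd_iff] at h1
    exact h1 n (Nat.lt_succ_self n)
  rw [hu, derivative_mul, derivative_X_pow, Nat.add_sub_cancel] at hd
  have e1 : (C (((n+1:ℕ):k)) * X ^ n * u : Polynomial k).coeff n = ((n+1:ℕ):k) * u.coeff 0 := by
    rw [show (C (((n+1:ℕ):k)) * X ^ n * u : Polynomial k) = (u * C (((n+1:ℕ):k))) * X ^ n from
      by ring, coeff_mul_X_pow', if_pos le_rfl, Nat.sub_self, coeff_mul_C, mul_comm]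
  have e2 : (X ^ (n+1) * derivative u : Polynomial k).coeff n = 0 := by
    rw [show (X ^ (n+1) * derivative u : Polynomial k) = derivative u * X ^ (n+1) from by ring,
      coeff_mul_X_pow']
    simp
  rw [coeff_add, e1, e2, add_zero] at hd
  have hne : ((n+1:ℕ):k) ≠ 0 := Nat.cast_ne_zero.mpr (Nat.succ_ne_zero n)
  have hu0 : u.coeff 0 = 0 := (mul_eq_zero.mp hd).resolve_left hne
  obtain ⟨v, hv⟩ := X_dvd_iff.mpr hu0
  exact ⟨v, by rw [hu, hv]; ring⟩

lemma key_lift [CharZero k] (n : ℕ) (b : kTE k) (a : Polynomial k)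
    (h : b - aeval (tP k + eP k) a ∈ Ideal.span {tP k ^ (n + 1), eP k ^ 2, eP k * tP k ^ n}) :
    ∃ x : Polynomial k,
      b - aeval (tP k + eP k) x ∈ Ideal.span {tP k ^ (n + 1), eP k ^ 2} := by
  obtain ⟨h0, h1⟩ := (mem_IC_iff n _).mp h
  rw [coeff_sub, coeffE0] at h0
  rw [coeff_sub, coeffE1] at h1
  obtain ⟨w, hw⟩ := h1
  set c : k := w.coeff 0 with hc
  refine ⟨a + C (c / ((n+1:ℕ):k)) * X ^ (n + 1), ?_⟩
  rw [mem_IB_iff]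
  have hne : ((n+1:ℕ):k) ≠ 0 := Nat.cast_ne_zero.mpr (Nat.succ_ne_zero n)
  constructor
  · rw [coeff_sub, coeffE0]
    have : b.coeff 0 - (a + C (c / ((n+1:ℕ):k)) * X ^ (n + 1)) =
        (b.coeff 0 - a) - C (c / ((n+1:ℕ):k)) * X ^ (n + 1) := by ring
    rw [this]
    exact dvd_sub h0 (Dvd.intro_left _ rfl)
  · rw [coeff_sub, coeffE1]
    have hderx : derivative (a + C (c / ((n+1:ℕ):k)) * X ^ (n + 1)) =
        derivative a + C c * X ^ n := by
      rw [derivative_add, derivative_C_mul, derivative_X_pow, Nat.add_sub_cancel]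
      rw [show (C (c / ((n+1:ℕ):k)) * (C (((n+1:ℕ)):k) * X ^ n) : Polynomial k) =
        C (c / ((n+1:ℕ):k) * ((n+1:ℕ):k)) * X ^ n from by rw [C_mul]; ring]
      rw [div_mul_cancel₀ c hne]
    rw [hderx]
    have : b.coeff 1 - (derivative a + C c * X ^ n) =
        (b.coeff 1 - derivative a) - C c * X ^ n := by ring
    rw [this, hw]
    have hX : (X : Polynomial k) ∣ (w - C c) := by
      rw [X_dvd_iff]
      simp [hc]
    obtain ⟨v, hv⟩ := hX
    exact ⟨v, by rw [show (X:Polynomial k)^n * w - C c * X^n = X^n * (w - C c) from by ring, hv]; ring⟩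

noncomputable def deltaB (k : Type u) [Field k] (n : ℕ) :
    (Polynomial k ⧸ Ideal.span {(X : Polynomial k) ^ (n + 2)}) →ₐ[k]
      kTE k ⧸ Ideal.span {tP k ^ (n + 1), eP k ^ 2} :=
  Ideal.Quotient.liftₐ _
    (aeval (Ideal.Quotient.mkₐ k (Ideal.span {tP k ^ (n + 1), eP k ^ 2}) (tP k + eP k)))
    (by
      intro p hp
      obtain ⟨q, rfl⟩ := Ideal.mem_span_singleton.mp hp
      rw [map_mul]
      have h1 : (aeval (Ideal.Quotient.mkₐ k (Ideal.span {tP k ^ (n + 1), eP k ^ 2})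
          (tP k + eP k))) ((X : Polynomial k) ^ (n+2)) =
          Ideal.Quotient.mkₐ k _ (aeval (tP k + eP k) ((X : Polynomial k) ^ (n+2))) :=
        aeval_algHom_apply (Ideal.Quotient.mkₐ k _) (tP k + eP k) _
      have hmem : aeval (tP k + eP k) ((X : Polynomial k) ^ (n+2)) ∈
          Ideal.span {tP k ^ (n + 1), eP k ^ 2} := by
        rw [mem_IB_iff n]
        constructor
        · rw [coeffE0]
          exact ⟨X, by ring⟩
        · rw [coeffE1, derivative_X_pow, show n + 2 - 1 = n + 1 from rfl]
          exact ⟨C (((n+2:ℕ)):k), by push_cast; ring⟩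
      have h0 : Ideal.Quotient.mkₐ k (Ideal.span {tP k ^ (n + 1), eP k ^ 2})
          (aeval (tP k + eP k) ((X : Polynomial k) ^ (n+2))) = 0 := by
        rw [Ideal.Quotient.mkₐ_eq_mk]
        exact Ideal.Quotient.eq_zero_iff_mem.mpr hmem
      rw [h1, h0]
      exact zero_mul (M₀ := kTE k ⧸ Ideal.span {tP k ^ (n + 1), eP k ^ 2}) _)

lemma deltaB_mk (n : ℕ) (p : Polynomial k) :
    deltaB k n (Ideal.Quotient.mk _ p) = Ideal.Quotient.mk _ (aeval (tP k + eP k) p) := by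
  change aeval (Ideal.Quotient.mkₐ k (Ideal.span {tP k ^ (n + 1), eP k ^ 2}) (tP k + eP k)) p = _
  exact aeval_algHom_apply (Ideal.Quotient.mkₐ k _) (tP k + eP k) _

noncomputable def deltaC (k : Type u) [Field k] (n : ℕ) :
    (Polynomial k ⧸ Ideal.span {(X : Polynomial k) ^ (n + 1)}) →ₐ[k]
      kTE k ⧸ Ideal.span {tP k ^ (n + 1), eP k ^ 2, eP k * tP k ^ n} :=
  Ideal.Quotient.liftₐ _
    (aeval (Ideal.Quotient.mkₐ k (Ideal.span {tP k ^ (n + 1), eP k ^ 2, eP k * tP k ^ n})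
      (tP k + eP k)))
    (by
      intro p hp
      obtain ⟨q, rfl⟩ := Ideal.mem_span_singleton.mp hp
      rw [map_mul]
      have h1 : (aeval (Ideal.Quotient.mkₐ k
          (Ideal.span {tP k ^ (n + 1), eP k ^ 2, eP k * tP k ^ n})
          (tP k + eP k))) ((X : Polynomial k) ^ (n+1)) =
          Ideal.Quotient.mkₐ k _ (aeval (tP k + eP k) ((X : Polynomial k) ^ (n+1))) :=
        aeval_algHom_apply (Ideal.Quotient.mkₐ k _) (tP k + eP k) _
      have hmem : aeval (tP k + eP k) ((X : Polynomial k) ^ (n+1)) ∈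
          Ideal.span {tP k ^ (n + 1), eP k ^ 2, eP k * tP k ^ n} := by
        rw [mem_IC_iff n]
        constructor
        · rw [coeffE0]
        · rw [coeffE1, derivative_X_pow, Nat.add_sub_cancel]
          exact ⟨C (((n+1:ℕ)):k), by push_cast; ring⟩
      have h0 : Ideal.Quotient.mkₐ k (Ideal.span {tP k ^ (n + 1), eP k ^ 2, eP k * tP k ^ n})
          (aeval (tP k + eP k) ((X : Polynomial k) ^ (n+1))) = 0 := by
        rw [Ideal.Quotient.mkₐ_eq_mk]
        exact Ideal.Quotient.eq_zero_iff_mem.mpr hmem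
      rw [h1, h0]
      exact zero_mul (M₀ := kTE k ⧸ Ideal.span {tP k ^ (n + 1), eP k ^ 2, eP k * tP k ^ n}) _)

lemma deltaC_mk (n : ℕ) (p : Polynomial k) :
    deltaC k n (Ideal.Quotient.mk _ p) = Ideal.Quotient.mk _ (aeval (tP k + eP k) p) := by
  change aeval (Ideal.Quotient.mkₐ k (Ideal.span {tP k ^ (n + 1), eP k ^ 2, eP k * tP k ^ n}) (tP k + eP k)) p = _
  exact aeval_algHom_apply (Ideal.Quotient.mkₐ k _) (tP k + eP k) _

lemma deltaB_injective [CharZero k] (n : ℕ) : Function.Injective (deltaB k n) := by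
  intro x y h
  obtain ⟨p, rfl⟩ := Ideal.Quotient.mk_surjective x
  obtain ⟨q, rfl⟩ := Ideal.Quotient.mk_surjective y
  rw [deltaB_mk, deltaB_mk] at h
  have h2 : aeval (tP k + eP k) p - aeval (tP k + eP k) q ∈
      Ideal.span {tP k ^ (n + 1), eP k ^ 2} := Ideal.Quotient.eq.mp h
  rw [← map_sub] at h2
  exact Ideal.Quotient.eq.mpr (Ideal.mem_span_singleton.mpr (E_mem_IB_dvd n _ h2))

lemma deltaC_injective (n : ℕ) : Function.Injective (deltaC k n) := by
  intro x y h
  obtain ⟨p, rfl⟩ := Ideal.Quotient.mk_surjective x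
  obtain ⟨q, rfl⟩ := Ideal.Quotient.mk_surjective y
  rw [deltaC_mk, deltaC_mk] at h
  have h2 : aeval (tP k + eP k) p - aeval (tP k + eP k) q ∈
      Ideal.span {tP k ^ (n + 1), eP k ^ 2, eP k * tP k ^ n} := Ideal.Quotient.eq.mp h
  rw [← map_sub] at h2
  exact Ideal.Quotient.eq.mpr (Ideal.mem_span_singleton.mpr (E_mem_IC_dvd n _ h2))

end Aux

/-- First step of the T¹-lifting principle, for the deformation functor
`D = Hom_{k-alg}(R, ·)` of a complete Noetherian local `k`-algebra `R` with residue field `k`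
(`char k = 0`): if `D(B_n) → D(C_n)` is surjective, then `D(A_{n+1}) → D(A_n)` is
surjective, where `A_m = k[t]/(t^{m+1})`, `B_n = k[t,ε]/(t^{n+1},ε²)` and
`C_n = k[t,ε]/(t^{n+1},ε²,εtⁿ)`. -/
theorem surjective_on_An_of_surjective_on_Cn
    (k : Type u) [Field k] [CharZero k] (n : ℕ) (hn : 1 ≤ n)
    (R : Type u) [CommRing R] [Algebra k R]
    [IsNoetherianRing R] [IsLocalRing R]
    (hres : Function.Bijective ((IsLocalRing.residue R).comp (algebraMap k R)))
    [IsAdicComplete (IsLocalRing.maximalIdeal R) R]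
    -- the canonical surjection `B_n → C_n`
    (s : (kTE k ⧸ Ideal.span {tP k ^ (n + 1), eP k ^ 2}) →ₐ[k]
        kTE k ⧸ Ideal.span {tP k ^ (n + 1), eP k ^ 2, eP k * tP k ^ n})
    (hs : ∀ x : kTE k, s (Ideal.Quotient.mk _ x) = Ideal.Quotient.mk _ x)
    -- the reduction `A_{n+1} → A_n`
    (red : (Polynomial k ⧸ Ideal.span {(X : Polynomial k) ^ (n + 2)}) →ₐ[k]
        Polynomial k ⧸ Ideal.span {(X : Polynomial k) ^ (n + 1)})
    (hred : ∀ y : Polynomial k, red (Ideal.Quotient.mk _ y) = Ideal.Quotient.mk _ y)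
    -- surjectivity of `Hom_{k-alg}(R, B_n) → Hom_{k-alg}(R, C_n)`
    (hsurj : Function.Surjective
      (fun φ : R →ₐ[k] kTE k ⧸ Ideal.span {tP k ^ (n + 1), eP k ^ 2} => s.comp φ)) :
    Function.Surjective
      (fun g : R →ₐ[k] Polynomial k ⧸ Ideal.span {(X : Polynomial k) ^ (n + 2)} =>
        red.comp g) := by
  intro f
  obtain ⟨φ, hφ⟩ := hsurj ((deltaC k n).comp f)
  have hsφ : ∀ r : R, s (φ r) = deltaC k n (f r) := fun r => AlgHom.congr_fun hφ r
  have hmem : ∀ r : R, φ r ∈ (deltaB k n).range := by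
    intro r
    obtain ⟨b, hb⟩ := Ideal.Quotient.mk_surjective (φ r)
    obtain ⟨a, ha⟩ := Ideal.Quotient.mk_surjective (f r)
    have h1 : Ideal.Quotient.mk (Ideal.span {tP k ^ (n + 1), eP k ^ 2, eP k * tP k ^ n}) b =
        Ideal.Quotient.mk _ (aeval (tP k + eP k) a) := by
      rw [← hs b, hb, hsφ r, ← ha, deltaC_mk]
    obtain ⟨x, hx⟩ := key_lift n b a (Ideal.Quotient.eq.mp h1)
    refine ⟨Ideal.Quotient.mk _ x, ?_⟩
    show deltaB k n (Ideal.Quotient.mk _ x) = φ r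
    rw [deltaB_mk, ← hb]
    exact (Ideal.Quotient.eq.mpr hx).symm
  have hinjB := deltaB_injective (k := k) n
  set e := AlgEquiv.ofInjective (deltaB k n) hinjB with he
  refine ⟨(e.symm.toAlgHom).comp (AlgHom.codRestrict φ (deltaB k n).range hmem), ?_⟩
  ext r
  show red (e.symm ⟨φ r, hmem r⟩) = f r
  have hδg : deltaB k n (e.symm ⟨φ r, hmem r⟩) = φ r := by
    have h2 := congrArg Subtype.val (e.apply_symm_apply ⟨φ r, hmem r⟩)
    rwa [he, AlgEquiv.ofInjective_apply] at h2
  apply deltaC_injective n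
  obtain ⟨x, hx⟩ := Ideal.Quotient.mk_surjective (e.symm ⟨φ r, hmem r⟩ :
    Polynomial k ⧸ Ideal.span {(X : Polynomial k) ^ (n + 2)})
  have hcomm : deltaC k n (red (e.symm ⟨φ r, hmem r⟩)) = s (deltaB k n (e.symm ⟨φ r, hmem r⟩)) := by
    rw [← hx, hred, deltaC_mk, deltaB_mk, hs]
  rw [hcomm, hδg, hsφ r]
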